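/- Let p(x) be a monic irreducible polynomial with integer coefficients of degree n all of whose roots are real and lie in the interval [-κ, κ], where κ ≥ 2. If p has at least two roots, and t ≥ 2 of its roots lie in a closed interval of length ζ with 0 < ζ < 1, then setting τ = t/n we have τ² ≤ -2·ln(2κ)/ln(ζ). -/

import Mathlib

open Polynomial

open Finset
open Polynomial Finset

lemma aux_prod_offDiag {m : ℕ} (F : Fin m → Fin m → ℝ) :
    ∏ pr ∈ (Finset.univ : Finset (Fin m)).offDiag, F pr.1 pr.2 = ∏ i, ∏ j ∈ {i}ᶜ, F i j := by
  rw [show (Finset.univ : Finset (Fin m)).offDiag = (Finset.univ ×ˢ Finset.univ).filter (fun a : Fin m × Fin m => a.1 ≠ a.2) by ext; simp, Finset.prod_filter, Finset.prod_product]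
  refine Finset.prod_congr rfl fun i _ => ?_
  rw [Finset.prod_ite, Finset.prod_const_one, mul_one]
  refine Finset.prod_congr ?_ fun _ _ => rfl
  ext j
  simp [eq_comm, ne_comm]

lemma aux_sq_prod_Ioi {m : ℕ} (y : Fin m → ℝ) :
    (∏ i, ∏ j ∈ Finset.Ioi i, (y i - y j) ^ 2) ^ 2
      = ∏ i, ∏ j ∈ ({i}ᶜ : Finset (Fin m)), (y i - y j) ^ 2 := by
  have h := Finset.prod_prod_Ioi_mul_eq_prod_prod_off_diag (f := fun i j : Fin m => (y j - y i) ^ 2)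
  refine Eq.trans ?_ (Eq.trans h (by congr!))
  rw [← Finset.prod_pow]
  refine Finset.prod_congr rfl fun i _ => ?_
  rw [← Finset.prod_pow]
  refine Finset.prod_congr rfl fun j _ => by ring

lemma aux_prod_image {m : ℕ} (y : Fin m → ℝ) (hy : Function.Injective y) (s : Finset ℝ)
    (hs : Finset.univ.image y = s) (f : ℝ → ℝ → ℝ) :
    ∏ pr ∈ s.offDiag, f pr.1 pr.2
      = ∏ pr ∈ (Finset.univ : Finset (Fin m)).offDiag, f (y pr.1) (y pr.2) := by
  refine (Finset.prod_nbij (fun pr : Fin m × Fin m => (y pr.1, y pr.2)) ?_ ?_ ?_ fun a _ => rfl).symm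
  · rintro ⟨i, j⟩ hij
    rw [Finset.mem_offDiag] at hij ⊢
    refine ⟨hs ▸ Finset.mem_image_of_mem y (Finset.mem_univ _),
      hs ▸ Finset.mem_image_of_mem y (Finset.mem_univ _), fun hc => hij.2.2 (hy hc)⟩
  · rintro ⟨i, j⟩ - ⟨i', j'⟩ - hc
    simp only [Prod.mk.injEq] at hc
    exact Prod.ext (hy hc.1) (hy hc.2)
  · rintro ⟨u, v⟩ huv
    have huv : (u, v) ∈ s.offDiag := huv
    rw [Finset.mem_offDiag] at huv
    obtain ⟨i, -, hi⟩ := Finset.mem_image.mp (hs ▸ huv.1)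
    obtain ⟨j, -, hj⟩ := Finset.mem_image.mp (hs ▸ huv.2.1)
    exact ⟨(i, j), Finset.mem_coe.mpr (Finset.mem_offDiag.mpr ⟨Finset.mem_univ _,
      Finset.mem_univ _, fun hc => huv.2.2 (by rw [← hi, ← hj]; exact congrArg y hc)⟩), by simp [hi, hj]⟩

open Polynomial Finset

lemma aux_discr (p : Polynomial ℤ) (hmonic : p.Monic) (hirr : Irreducible p)
    (n : ℕ) (hn : p.natDegree = n) (hn2 : 2 ≤ n)
    (hsplit : ((p.map (Int.castRingHom ℝ)).roots).card = n) :
    (p.map (Int.castRingHom ℝ)).roots.Nodup ∧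
    1 ≤ ∏ pr ∈ ((p.map (Int.castRingHom ℝ)).roots.toFinset).offDiag, (pr.1 - pr.2) ^ 2 := by
  set q : Polynomial ℝ := p.map (Int.castRingHom ℝ) with hq
  set P : Polynomial ℚ := p.map (Int.castRingHom ℚ) with hP
  have hPirr : Irreducible P :=
    (Polynomial.IsPrimitive.Int.irreducible_iff_irreducible_map_cast hmonic.isPrimitive).mp hirr
  have hPmonic : P.Monic := hmonic.map _
  have hP0 : P ≠ 0 := hPmonic.ne_zero
  have hPdeg : P.natDegree = n := by rw [hP, hmonic.natDegree_map]; exact hn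
  haveI : Fact (Irreducible P) := ⟨hPirr⟩
  set L := AdjoinRoot P
  set pb : PowerBasis ℚ L := AdjoinRoot.powerBasis hP0 with hpb
  haveI : FiniteDimensional ℚ L := pb.finite
  have hdim : pb.dim = n := by rw [hpb, AdjoinRoot.powerBasis_dim, hPdeg]
  have hfinrank : Module.finrank ℚ L = n := by rw [pb.finrank]; exact hdim
  have hcard : Fintype.card (Fin pb.dim) = Fintype.card (L →ₐ[ℚ] ℂ) := by
    rw [AlgHom.card, hfinrank, Fintype.card_fin, hdim]
  let e : Fin pb.dim ≃ (L →ₐ[ℚ] ℂ) := Fintype.equivOfCardEq hcard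
  have hform := Algebra.discr_powerBasis_eq_prod ℚ ℂ pb e
  have hqsplits : q.Splits := (splits_iff_card_roots).mpr (by
    rw [hsplit, ← hn, hq, hmonic.natDegree_map])
  have hroots_map : (p.map (Int.castRingHom ℂ)).roots = q.roots.map (algebraMap ℝ ℂ) := by
    have h2 : (algebraMap ℝ ℂ).comp (Int.castRingHom ℝ) = Int.castRingHom ℂ :=
      Subsingleton.elim _ _
    rw [← hqsplits.roots_map (algebraMap ℝ ℂ), hq, Polynomial.map_map, h2]
  have h1 : Polynomial.aeval pb.gen P = 0 := by
    rw [hpb, AdjoinRoot.powerBasis_gen, Polynomial.aeval_def]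
    exact AdjoinRoot.eval₂_root P
  have hgen_int : IsIntegral ℤ pb.gen := by
    refine ⟨p, hmonic, ?_⟩
    have h2 : (algebraMap ℤ L) = (algebraMap ℚ L).comp (Int.castRingHom ℚ) :=
      Subsingleton.elim _ _
    rw [h2, ← Polynomial.eval₂_map]
    simpa [Polynomial.aeval_def, hP] using h1
  set d : ℚ := Algebra.discr ℚ pb.basis with hd
  have hd0 : d ≠ 0 := Algebra.discr_not_zero_of_basis ℚ pb.basis
  have hdint : IsIntegral ℤ d := by
    refine Algebra.discr_isIntegral ℚ (fun i => ?_)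
    rw [pb.basis_eq_pow]
    exact hgen_int.pow _
  obtain ⟨z, hz⟩ := IsIntegrallyClosed.isIntegral_iff.mp hdint
  -- nodup of real roots
  have hnodup : q.roots.Nodup := by
    have hqsep : q.Separable := by
      have h3 : q = P.map (algebraMap ℚ ℝ) := by
        rw [hP, hq, Polynomial.map_map,
          show (algebraMap ℚ ℝ).comp (Int.castRingHom ℚ) = Int.castRingHom ℝ from
            Subsingleton.elim _ _]
      rw [h3]
      exact hPirr.separable.map
    exact nodup_roots hqsep
  -- choose real preimages of embedding values
  have hx : ∀ i : Fin pb.dim, ∃ r, r ∈ q.roots ∧ algebraMap ℝ ℂ r = (e i) pb.gen := by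
    intro i
    have hmem : (e i) pb.gen ∈ (p.map (Int.castRingHom ℂ)).roots := by
      have h3 : p.map (Int.castRingHom ℂ) = P.map (algebraMap ℚ ℂ) := by
        rw [hP, Polynomial.map_map,
          show (algebraMap ℚ ℂ).comp (Int.castRingHom ℚ) = Int.castRingHom ℂ from
            Subsingleton.elim _ _]
      rw [h3, mem_roots ((hPmonic.map (algebraMap ℚ ℂ)).ne_zero)]
      rw [IsRoot, Polynomial.eval_map, ← Polynomial.aeval_def, Polynomial.aeval_algHom_apply,
        h1, map_zero]
    rw [hroots_map] at hmem
    obtain ⟨r, hr1, hr2⟩ := Multiset.mem_map.mp hmem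
    exact ⟨r, hr1, hr2⟩
  choose y hy1 hy2 using hx
  simp only [Complex.coe_algebraMap] at hy2
  have hyinj : Function.Injective y := by
    intro i j hij
    refine e.injective (pb.algHom_ext ?_)
    rw [← hy2 i, ← hy2 j, hij]
  have him : Finset.univ.image y = q.roots.toFinset := by
    apply Finset.eq_of_subset_of_card_le
    · intro r hr
      obtain ⟨i, -, rfl⟩ := Finset.mem_image.mp hr
      exact Multiset.mem_toFinset.mpr (hy1 i)
    · rw [Finset.card_image_of_injective _ hyinj, Multiset.toFinset_card_of_nodup hnodup,
        hsplit, Finset.card_univ, Fintype.card_fin, hdim]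
  -- the discriminant as a real product
  set Δ : ℝ := ∏ i, ∏ j ∈ Finset.Ioi i, (y i - y j) ^ 2 with hΔdef
  have hΔc : (Δ : ℂ) = algebraMap ℚ ℂ d := by
    rw [hform, hΔdef]
    push_cast
    refine Finset.prod_congr rfl fun i _ => Finset.prod_congr rfl fun j _ => ?_
    rw [← hy2 i, ← hy2 j]
    ring
  have hzΔ : ((z : ℝ)) = Δ := by
    have h4 : ((z : ℝ) : ℂ) = (Δ : ℂ) := by
      rw [hΔc, ← hz]
      push_cast
      norm_num
    exact_mod_cast h4
  have hΔnonneg : 0 ≤ Δ := by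
    rw [hΔdef]
    positivity
  have hz0 : z ≠ 0 := by
    rintro rfl
    rw [map_zero] at hz
    exact hd0 hz.symm
  have h1Δ : 1 ≤ Δ := by
    rw [← hzΔ] at hΔnonneg ⊢
    have : (0:ℤ) < z := by
      rcases lt_trichotomy z 0 with h | h | h
      · exact absurd hΔnonneg (by push_cast; exact not_le.mpr (by exact_mod_cast h))
      · exact absurd h hz0
      · exact h
    exact_mod_cast this
  refine ⟨hnodup, ?_⟩
  have h5 : (1:ℝ) ≤ Δ ^ 2 := one_le_pow₀ h1Δ
  rw [hΔdef, aux_sq_prod_Ioi y] at h5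
  have h6 := aux_prod_image y hyinj _ him (fun u v => (u - v) ^ 2)
  have h7 := aux_prod_offDiag (fun i j => (y i - y j) ^ 2)
  exact h5.trans_eq (h7.symm.trans h6.symm)

theorem stmt_0 (κ ζ a : ℝ) (hκ : 2 ≤ κ) (hζ0 : 0 < ζ) (hζ1 : ζ < 1)
    (p : Polynomial ℤ) (hmonic : p.Monic) (hirr : Irreducible p)
    (n : ℕ) (hn : p.natDegree = n) (hn2 : 2 ≤ n)
    (hsplit : ((p.map (Int.castRingHom ℝ)).roots).card = n)
    (hroots : ∀ x ∈ (p.map (Int.castRingHom ℝ)).roots, -κ ≤ x ∧ x ≤ κ)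
    (t : ℕ)
    (ht : t = ((p.map (Int.castRingHom ℝ)).roots.filter
        (fun x => a ≤ x ∧ x ≤ a + ζ)).card)
    (ht2 : 2 ≤ t) :
    ((t : ℝ) / n) ^ 2 ≤ -2 * Real.log (2 * κ) / Real.log ζ := by
  obtain ⟨hnodup, hD⟩ := aux_discr p hmonic hirr n hn hn2 hsplit
  set q : Polynomial ℝ := p.map (Int.castRingHom ℝ) with hq
  set s : Finset ℝ := q.roots.toFinset with hs
  have hscard : s.card = n := by
    rw [hs, Multiset.toFinset_card_of_nodup hnodup, hsplit]
  set st : Finset ℝ := s.filter (fun x => a ≤ x ∧ x ≤ a + ζ) with hst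
  have htcard : st.card = t := by
    rw [ht, hst, hs, ← Multiset.toFinset_filter,
      Multiset.toFinset_card_of_nodup (hnodup.filter _)]
  have hts : st ⊆ s := Finset.filter_subset _ _
  have htn : t ≤ n := by
    rw [← htcard, ← hscard]; exact Finset.card_le_card hts
  have hodsub : st.offDiag ⊆ s.offDiag := by
    intro pr hpr
    rw [Finset.mem_offDiag] at hpr ⊢
    exact ⟨hts hpr.1, hts hpr.2.1, hpr.2.2⟩
  -- pointwise bound
  have hbound : ∀ pr ∈ s.offDiag, (pr.1 - pr.2) ^ 2 ≤
      (if pr ∈ st.offDiag then ζ ^ 2 else (2 * κ) ^ 2) := by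
    rintro ⟨u, v⟩ hpr
    rw [Finset.mem_offDiag] at hpr
    split_ifs with hmem
    · rw [Finset.mem_offDiag, hst] at hmem
      obtain ⟨h1, h2, -⟩ := hmem
      rw [Finset.mem_filter] at h1 h2
      have := h1.2; have := h2.2
      apply sq_le_sq'
      · simp only at * ; linarith
      · simp only at * ; linarith
    · have h1 := hroots u (Multiset.mem_toFinset.mp hpr.1)
      have h2 := hroots v (Multiset.mem_toFinset.mp hpr.2.1)
      apply sq_le_sq' <;> simp only at * <;> linarith
  have key : (1 : ℝ) ≤ ∏ pr ∈ s.offDiag, (if pr ∈ st.offDiag then ζ ^ 2 else (2 * κ) ^ 2) := by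
    refine hD.trans (Finset.prod_le_prod (fun pr _ => sq_nonneg _) hbound)
  rw [Finset.prod_ite, Finset.prod_const, Finset.prod_const, Finset.filter_mem_eq_inter,
    Finset.inter_eq_right.mpr hodsub] at key
  set c1 := st.offDiag.card with hc1def
  set c2 := (s.offDiag.filter (fun pr => ¬ pr ∈ st.offDiag)).card with hc2def
  have hc1 : (c1 : ℝ) = (t : ℝ) * t - t := by
    rw [hc1def, Finset.offDiag_card, htcard]
    have : t ≤ t * t := Nat.le_mul_of_pos_left t (by omega)
    push_cast [this]
    ring
  have hc2 : (c2 : ℝ) ≤ (n : ℝ) * n := by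
    have h1 : c2 ≤ s.offDiag.card := Finset.card_le_card (Finset.filter_subset _ _)
    have h2 : s.offDiag.card ≤ n * n := by
      rw [Finset.offDiag_card, hscard]; omega
    exact_mod_cast h1.trans h2
  -- take logs
  have hκ0 : (0:ℝ) < 2 * κ := by linarith
  have hlog : 0 ≤ (c1 : ℝ) * (2 * Real.log ζ) + (c2 : ℝ) * (2 * Real.log (2 * κ)) := by
    have h0 : (0:ℝ) < ζ ^ 2 ^ c1 * ((2*κ) ^ 2) ^ c2 := by positivity
    have := Real.log_le_log (by norm_num) key
    rw [Real.log_one] at this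
    calc (0:ℝ) ≤ Real.log ((ζ ^ 2) ^ c1 * ((2 * κ) ^ 2) ^ c2) := this
      _ = (c1 : ℝ) * (2 * Real.log ζ) + (c2 : ℝ) * (2 * Real.log (2 * κ)) := by
          rw [Real.log_mul (by positivity) (by positivity), Real.log_pow, Real.log_pow,
            Real.log_pow, Real.log_pow]
          push_cast
          ring
  have hLz : Real.log ζ < 0 := Real.log_neg hζ0 hζ1
  have hM : 0 < Real.log (2 * κ) := Real.log_pos (by linarith)
  have hn0 : (0:ℝ) < n := by exact_mod_cast Nat.lt_of_lt_of_le Nat.zero_lt_two hn2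
  have htr : (2:ℝ) ≤ t := by exact_mod_cast ht2
  rw [div_pow, show -2 * Real.log (2 * κ) / Real.log ζ
      = 2 * Real.log (2 * κ) / (-Real.log ζ) from by ring,
    div_le_div_iff₀ (by positivity) (by linarith)]
  nlinarith [mul_le_mul_of_nonneg_right hc2 hM.le, sq_nonneg ((t:ℝ) - 2),
    mul_nonneg (mul_nonneg (by linarith : (0:ℝ) ≤ (t:ℝ)) (by linarith : (0:ℝ) ≤ (t:ℝ))) (neg_nonneg.mpr hLz.le)]
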